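/- For all n ∈ {2,3,...}, p ∈ (0,1) and t ≥ 0, the number Y of isolated vertices in G(n,p) satisfies the left tail bound P((Y-μ)/σ ≤ -t) ≤ exp(-t²σ²/(4μ)). -/

import Mathlib

open MeasureTheory ProbabilityTheory Real Finset

noncomputable section

namespace ErdosRenyiIsolated

/-- Index set for the potential edges of a graph on `Fin n`. -/
abbrev EdgeIdx (n : ℕ) := {e : Fin n × Fin n // e.1 < e.2}

/-- Adjacency relation of the random graph encoded by `ω` : `u` and `v` are adjacent
if the corresponding edge indicator is `true`. -/
def adj {n : ℕ} (ω : EdgeIdx n → Bool) (u v : Fin n) : Prop :=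
  if h : u < v then ω ⟨(u, v), h⟩ = true
  else if h' : v < u then ω ⟨(v, u), h'⟩ = true
  else False

instance {n : ℕ} (ω : EdgeIdx n → Bool) (u v : Fin n) : Decidable (adj ω u v) := by
  unfold adj
  split
  · exact inferInstance
  · split
    · exact inferInstance
    · exact inferInstance

/-- Degree of vertex `v` in the graph encoded by `ω`. -/
def deg {n : ℕ} (ω : EdgeIdx n → Bool) (v : Fin n) : ℕ :=
  (Finset.univ.filter fun w => adj ω v w).card

/-- The number of isolated vertices of the graph encoded by `ω`. -/
def isolCount {n : ℕ} (ω : EdgeIdx n → Bool) : ℕ :=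
  (Finset.univ.filter fun v => deg ω v = 0).card

/-- The Bernoulli(p) measure on `Bool`. -/
def bern (p : ℝ) : Measure Bool :=
  ENNReal.ofReal p • Measure.dirac true + ENNReal.ofReal (1 - p) • Measure.dirac false

instance (p : ℝ) : IsFiniteMeasure (bern p) := by
  constructor
  have h : bern p Set.univ ≤ ENNReal.ofReal p + ENNReal.ofReal (1 - p) := by
    simp [bern]
  exact lt_of_le_of_lt h (ENNReal.add_lt_top.mpr ⟨ENNReal.ofReal_lt_top, ENNReal.ofReal_lt_top⟩)

/-- The Erdős–Rényi random graph measure `G(n,p)`: the edge indicators are i.i.d.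
Bernoulli(p). -/
def gnp (n : ℕ) (p : ℝ) : Measure (EdgeIdx n → Bool) :=
  Measure.pi fun _ => bern p

/-- The Erdős–Rényi measure together with an independent uniformly chosen vertex. -/
def gnpV (n : ℕ) (p : ℝ) : Measure ((EdgeIdx n → Bool) × Fin n) :=
  (gnp n p).prod (uniformOn (Set.univ : Set (Fin n)))

/-- Adjacency in the graph obtained by deleting all edges incident to `v'`. -/
def adjDel {n : ℕ} (ω : EdgeIdx n → Bool) (v' u v : Fin n) : Prop :=
  adj ω u v ∧ u ≠ v' ∧ v ≠ v'

instance {n : ℕ} (ω : EdgeIdx n → Bool) (v' u v : Fin n) : Decidable (adjDel ω v' u v) := by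
  unfold adjDel; exact inferInstance

/-- Degree of `v` in the graph `ω` with all edges incident to `v'` deleted. -/
def degDel {n : ℕ} (ω : EdgeIdx n → Bool) (v' v : Fin n) : ℕ :=
  (Finset.univ.filter fun w => adjDel ω v' v w).card

/-- Number of isolated vertices in the graph `ω` with all edges incident to `v'` deleted. -/
def isolCountDel {n : ℕ} (ω : EdgeIdx n → Bool) (v' : Fin n) : ℕ :=
  (Finset.univ.filter fun v => degDel ω v' v = 0).card

variable {n : ℕ}

lemma sum_pi_bool {ι : Type*} [Fintype ι] [DecidableEq ι] (c : ι → Bool → ℝ) :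
    ∑ ω : ι → Bool, ∏ i, c i (ω i) = ∏ i, (c i true + c i false) := by
  have : ∀ i : ι, ∑ b : Bool, c i b = c i true + c i false := by
    intro i; rw [Fintype.sum_bool]
  rw [← Finset.prod_congr rfl fun i _ => this i]
  rw [Finset.prod_univ_sum]
  rw [Fintype.piFinset_univ]

lemma sum_split {ι : Type*} [Fintype ι] [DecidableEq ι] (P : ι → Prop) [DecidablePred P]
    (c : ι → Bool → ℝ) (h1 : ∀ i, c i true + c i false = 1)
    (F G : (ι → Bool) → ℝ)
    (hF : ∀ ω ω' : ι → Bool, (∀ e, P e → ω e = ω' e) → F ω = F ω')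
    (hG : ∀ ω ω' : ι → Bool, (∀ e, ¬ P e → ω e = ω' e) → G ω = G ω') :
    ∑ ω : ι → Bool, (∏ i, c i (ω i)) * (F ω * G ω)
      = (∑ ω : ι → Bool, (∏ i, c i (ω i)) * F ω)
        * (∑ ω : ι → Bool, (∏ i, c i (ω i)) * G ω) := by
  classical
  set e := (Equiv.piEquivPiSubtypeProd P (fun _ => Bool)).symm with he
  have hsum : ∀ f : (ι → Bool) → ℝ, ∑ ω : ι → Bool, f ω
      = ∑ x : (∀ i : {x // P x}, Bool) × (∀ i : {x // ¬ P x}, Bool), f (e x) :=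
    fun f => (Equiv.sum_comp e f).symm
  have happ : ∀ (a : ∀ i : {x // P x}, Bool) (b : ∀ i : {x // ¬ P x}, Bool) (i : ι),
      e (a, b) i = if h : P i then a ⟨i, h⟩ else b ⟨i, h⟩ := by
    intro a b i
    simp [he, Equiv.piEquivPiSubtypeProd_symm_apply]
  -- weight factorization
  have hw : ∀ (a : ∀ i : {x // P x}, Bool) (b : ∀ i : {x // ¬ P x}, Bool),
      (∏ i, c i (e (a, b) i))
        = (∏ i : {x // P x}, c i (a i)) * (∏ i : {x // ¬ P x}, c i (b i)) := by
    intro a b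
    rw [← Fintype.prod_subtype_mul_prod_subtype P (fun i => c i (e (a, b) i))]
    congr 1
    · exact Finset.prod_congr rfl fun i _ => by rw [happ]; rw [dif_pos i.2]
    · exact Finset.prod_congr rfl fun i _ => by rw [happ]; rw [dif_neg i.2]
  have hFa : ∀ (a : ∀ i : {x // P x}, Bool) (b : ∀ i : {x // ¬ P x}, Bool),
      F (e (a, b)) = F (e (a, fun _ => false)) := by
    intro a b
    apply hF
    intro i hi
    rw [happ, happ, dif_pos hi, dif_pos hi]
  have hGb : ∀ (a : ∀ i : {x // P x}, Bool) (b : ∀ i : {x // ¬ P x}, Bool),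
      G (e (a, b)) = G (e (fun _ => false, b)) := by
    intro a b
    apply hG
    intro i hi
    rw [happ, happ, dif_neg hi, dif_neg hi]
  have hA1 : (∑ a : ∀ i : {x // P x}, Bool, ∏ i : {x // P x}, c i (a i)) = 1 := by
    rw [sum_pi_bool]
    exact Finset.prod_eq_one fun i _ => h1 i
  have hB1 : (∑ b : ∀ i : {x // ¬ P x}, Bool, ∏ i : {x // ¬ P x}, c i (b i)) = 1 := by
    rw [sum_pi_bool]
    exact Finset.prod_eq_one fun i _ => h1 i
  have key : ∀ F' G' : (ι → Bool) → ℝ,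
      (∀ a b b', F' (e (a, b)) = F' (e (a, b'))) →
      (∀ a a' b, G' (e (a, b)) = G' (e (a', b))) →
      ∑ ω : ι → Bool, (∏ i, c i (ω i)) * (F' ω * G' ω)
        = (∑ a : ∀ i : {x // P x}, Bool, (∏ i : {x // P x}, c i (a i))
              * F' (e (a, fun _ => false)))
          * (∑ b : ∀ i : {x // ¬ P x}, Bool, (∏ i : {x // ¬ P x}, c i (b i))
              * G' (e (fun _ => false, b))) := by
    intro F' G' hF' hG'
    rw [hsum]
    rw [Fintype.sum_prod_type]
    rw [Finset.sum_mul_sum]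
    apply Finset.sum_congr rfl
    intro a _
    apply Finset.sum_congr rfl
    intro b _
    rw [hw, hF' a b (fun _ => false), hG' a (fun _ => false) b]
    ring
  have kFG := key F G (fun a b b' => (hFa a b).trans (hFa a b').symm)
    (fun a a' b => (hGb a b).trans (hGb a' b).symm)
  have kF := key F (fun _ => 1) (fun a b b' => (hFa a b).trans (hFa a b').symm)
    (fun _ _ _ => rfl)
  have kG := key (fun _ => 1) G (fun _ _ _ => rfl)
    (fun a a' b => (hGb a b).trans (hGb a' b).symm)
  simp only [mul_one, one_mul] at kF kG
  rw [kFG, kF, kG, hA1, hB1]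
  ring

/-! ### Combinatorial lemmas -/

variable {n : ℕ}

/-- `e` touches the vertex `v`. -/
def touch (v : Fin n) (e : EdgeIdx n) : Prop := e.1.1 = v ∨ e.1.2 = v

instance (v : Fin n) (e : EdgeIdx n) : Decidable (touch v e) := by
  unfold touch; exact inferInstance

lemma adj_symm (ω : EdgeIdx n → Bool) (u w : Fin n) : adj ω u w ↔ adj ω w u := by
  unfold adj
  rcases lt_trichotomy u w with h | h | h
  · rw [dif_pos h, dif_neg (asymm h), dif_pos h]
  · subst h; rw [dif_neg (lt_irrefl u)]
  · rw [dif_neg (asymm h), dif_pos h, dif_pos h]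

lemma deg_eq_zero_iff (ω : EdgeIdx n → Bool) (v : Fin n) :
    deg ω v = 0 ↔ ∀ w, ¬ adj ω v w := by
  unfold deg
  rw [Finset.card_eq_zero, Finset.filter_eq_empty_iff]
  simp

lemma deg_eq_zero_iff_edges (ω : EdgeIdx n → Bool) (v : Fin n) :
    deg ω v = 0 ↔ ∀ e, touch v e → ω e = false := by
  rw [deg_eq_zero_iff]
  constructor
  · intro h e he
    obtain ⟨⟨a, b⟩, hab⟩ := e
    rcases he with h1 | h1
    · simp only at h1; subst h1
      have := h b
      unfold adj at this
      rw [dif_pos hab] at this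
      simpa using this
    · simp only at h1; subst h1
      have := h a
      unfold adj at this
      rw [dif_neg (asymm hab), dif_pos hab] at this
      simpa using this
  · intro h w
    unfold adj
    split_ifs with h1 h2
    · rw [h _ (Or.inl rfl)]; simp
    · rw [h _ (Or.inr rfl)]; simp
    · exact not_false

lemma deg_congr_touch {ω ω' : EdgeIdx n → Bool} {v : Fin n}
    (h : ∀ e, touch v e → ω e = ω' e) (w : Fin n) : adj ω v w ↔ adj ω' v w := by
  unfold adj
  split_ifs with h1 h2
  · rw [h _ (Or.inl rfl)]
  · rw [h _ (Or.inr rfl)]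
  · exact Iff.rfl

lemma adj_congr_offtouch {ω ω' : EdgeIdx n → Bool} {v u w : Fin n}
    (hu : u ≠ v) (hw : w ≠ v) (h : ∀ e, ¬ touch v e → ω e = ω' e) :
    adj ω u w ↔ adj ω' u w := by
  unfold adj
  split_ifs with h1 h2
  · rw [h _ (by simp [touch, hu, hw])]
  · rw [h _ (by simp [touch, hu, hw])]
  · exact Iff.rfl

lemma isolCountDel_congr {ω ω' : EdgeIdx n → Bool} {v : Fin n}
    (h : ∀ e, ¬ touch v e → ω e = ω' e) : isolCountDel ω v = isolCountDel ω' v := by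
  unfold isolCountDel
  congr 1
  apply Finset.filter_congr
  intro u _
  have : degDel ω v u = degDel ω' v u := by
    unfold degDel
    congr 1
    apply Finset.filter_congr
    intro w _
    unfold adjDel
    by_cases hu : u = v
    · simp [hu]
    · by_cases hw : w = v
      · simp [hw]
      · simp only [hu, hw, ne_eq, not_false_iff, and_true]
        rw [adj_congr_offtouch hu hw h]
  rw [this]

lemma isolCount_eq_isolCountDel {ω : EdgeIdx n → Bool} {v : Fin n}
    (h : deg ω v = 0) : isolCount ω = isolCountDel ω v := by
  have hadj : ∀ w, ¬ adj ω v w := (deg_eq_zero_iff ω v).mp h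
  unfold isolCount isolCountDel
  congr 1
  apply Finset.filter_congr
  intro u _
  by_cases hu : u = v
  · subst hu
    simp only [h, true_iff, eq_self_iff_true]
    unfold degDel
    rw [Finset.card_eq_zero, Finset.filter_eq_empty_iff]
    intro w _
    unfold adjDel
    simp
  · have : degDel ω v u = deg ω u := by
      unfold degDel deg
      congr 1
      apply Finset.filter_congr
      intro w _
      unfold adjDel
      constructor
      · exact fun hh => hh.1
      · intro ha
        refine ⟨ha, hu, ?_⟩
        intro hw
        subst hw
        exact hadj u ((adj_symm ω u w).mp ha)
    rw [this]

lemma sum_isolCountDel_le (ω : EdgeIdx n → Bool) :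
    ∑ v : Fin n, isolCountDel ω v ≤ n * isolCount ω + 2 * n := by
  have hsub : ∀ v : Fin n,
      (Finset.univ.filter fun u => degDel ω v u = 0)
        ⊆ (Finset.univ.filter fun u => deg ω u = 0) ∪ ({v} ∪
            (Finset.univ.filter fun u => deg ω u = 1 ∧ adj ω u v)) := by
    intro v u hu
    simp only [Finset.mem_filter, Finset.mem_univ, true_and] at hu
    by_cases h0 : deg ω u = 0
    · exact Finset.mem_union_left _ (by simp [h0])
    by_cases huv : u = v
    · exact Finset.mem_union_right _ (Finset.mem_union_left _ (by simp [huv]))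
    refine Finset.mem_union_right _ (Finset.mem_union_right _ ?_)
    simp only [Finset.mem_filter, Finset.mem_univ, true_and]
    have hnb : ∀ w, adj ω u w → w = v := by
      intro w haw
      by_contra hwv
      have h1 : adjDel ω v u w := ⟨haw, huv, hwv⟩
      have h2 : w ∈ Finset.univ.filter fun w => adjDel ω v u w := by simp [h1]
      have h3 := Finset.card_pos.mpr ⟨w, h2⟩
      unfold degDel at hu
      omega
    have hne : (Finset.univ.filter fun w => adj ω u w).Nonempty := by
      rw [← Finset.card_pos]
      unfold deg at h0
      omega
    obtain ⟨w, hw⟩ := hne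
    simp only [Finset.mem_filter, Finset.mem_univ, true_and] at hw
    have hwv := hnb w hw
    subst hwv
    refine ⟨?_, hw⟩
    unfold deg
    rw [Finset.card_eq_one]
    refine ⟨w, ?_⟩
    apply Finset.eq_singleton_iff_unique_mem.mpr
    refine ⟨by simp [hw], ?_⟩
    intro x hx
    simp only [Finset.mem_filter, Finset.mem_univ, true_and] at hx
    exact hnb x hx
  have hB : ∑ v : Fin n,
      (Finset.univ.filter fun u => deg ω u = 1 ∧ adj ω u v).card ≤ n := by
    have : ∀ v : Fin n, (Finset.univ.filter fun u => deg ω u = 1 ∧ adj ω u v).card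
        = ∑ u : Fin n, if deg ω u = 1 ∧ adj ω u v then 1 else 0 := by
      intro v; rw [Finset.card_filter]
    simp only [this]
    rw [Finset.sum_comm]
    have hinner : ∀ u : Fin n,
        (∑ v : Fin n, if deg ω u = 1 ∧ adj ω u v then 1 else 0) ≤ 1 := by
      intro u
      by_cases hdeg : deg ω u = 1
      · have : (∑ v : Fin n, if deg ω u = 1 ∧ adj ω u v then 1 else 0)
            = ∑ v : Fin n, if adj ω u v then 1 else 0 := by
          apply Finset.sum_congr rfl
          intro v _
          simp [hdeg]
        rw [this, ← Finset.card_filter]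
        have : (Finset.univ.filter fun v => adj ω u v).card = deg ω u := rfl
        omega
      · simp [hdeg]
    calc ∑ u : Fin n, ∑ v : Fin n, (if deg ω u = 1 ∧ adj ω u v then 1 else 0)
        ≤ ∑ _u : Fin n, 1 := Finset.sum_le_sum fun u _ => hinner u
      _ = n := by simp
  have hstep : ∀ v : Fin n, isolCountDel ω v
      ≤ isolCount ω + 1 + (Finset.univ.filter fun u => deg ω u = 1 ∧ adj ω u v).card := by
    intro v
    calc isolCountDel ω v
        ≤ ((Finset.univ.filter fun u => deg ω u = 0) ∪ ({v} ∪
            (Finset.univ.filter fun u => deg ω u = 1 ∧ adj ω u v))).card :=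
          Finset.card_le_card (hsub v)
      _ ≤ (Finset.univ.filter fun u => deg ω u = 0).card + ({v} ∪
            (Finset.univ.filter fun u => deg ω u = 1 ∧ adj ω u v)).card :=
          Finset.card_union_le _ _
      _ ≤ isolCount ω + (1 + (Finset.univ.filter fun u => deg ω u = 1 ∧ adj ω u v).card) := by
          have := Finset.card_union_le ({v} : Finset (Fin n))
            (Finset.univ.filter fun u => deg ω u = 1 ∧ adj ω u v)
          simp only [Finset.card_singleton] at this
          exact Nat.add_le_add le_rfl this
      _ = isolCount ω + 1 + (Finset.univ.filter fun u => deg ω u = 1 ∧ adj ω u v).card := by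
          ring
  calc ∑ v : Fin n, isolCountDel ω v
      ≤ ∑ v : Fin n, (isolCount ω + 1
          + (Finset.univ.filter fun u => deg ω u = 1 ∧ adj ω u v).card) :=
        Finset.sum_le_sum fun v _ => hstep v
    _ = n * (isolCount ω + 1)
          + ∑ v : Fin n, (Finset.univ.filter fun u => deg ω u = 1 ∧ adj ω u v).card := by
        rw [Finset.sum_add_distrib, Finset.sum_const]
        simp [Nat.smul_one_eq_cast]
    _ ≤ n * (isolCount ω + 1) + n := Nat.add_le_add le_rfl hB
    _ = n * isolCount ω + 2 * n := by ring

lemma card_touch (hn : 1 ≤ n) (v : Fin n) :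
    (Finset.univ.filter fun e : EdgeIdx n => touch v e).card = n - 1 := by
  have : (Finset.univ.filter fun e : EdgeIdx n => touch v e).card
      = (Finset.univ.erase v).card := by
    refine Finset.card_bij' (fun e _ => if e.1.1 = v then e.1.2 else e.1.1)
      (fun w hw => if h : w < v then (⟨(w, v), h⟩ : EdgeIdx n) else
        ⟨(v, w), by
          have hwv : w ≠ v := Finset.ne_of_mem_erase hw
          exact lt_of_le_of_ne (not_lt.mp h) (Ne.symm hwv)⟩) ?_ ?_ ?_ ?_
    · intro e he
      simp only [Finset.mem_filter, Finset.mem_univ, true_and] at he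
      obtain ⟨⟨a, b⟩, hab⟩ := e
      rcases he with h1 | h1
      · simp only at h1; subst h1
        simp only [if_pos rfl]
        exact Finset.mem_erase_of_ne_of_mem (ne_of_gt hab) (Finset.mem_univ _)
      · simp only at h1; subst h1
        have hne : a ≠ b := ne_of_lt hab
        simp only [if_neg hne]
        exact Finset.mem_erase_of_ne_of_mem hne (Finset.mem_univ _)
    · intro w hw
      simp only [Finset.mem_filter, Finset.mem_univ, true_and]
      split_ifs with h
      · exact Or.inr rfl
      · exact Or.inl rfl
    · intro e he
      simp only [Finset.mem_filter, Finset.mem_univ, true_and] at he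
      obtain ⟨⟨a, b⟩, hab⟩ := e
      rcases he with h1 | h1
      · simp only at h1; subst h1
        simp [asymm hab]
      · simp only at h1; subst h1
        have hne : a ≠ b := ne_of_lt hab
        simp [hne, hab]
    · intro w hw
      have hwv : w ≠ v := Finset.ne_of_mem_erase hw
      split_ifs with h
      · simp [h, hwv]
      · simp [h]
      · exact absurd rfl ‹_›
  rw [this, Finset.card_erase_of_mem (Finset.mem_univ v)]
  simp

/-! ### The weight function -/

/-- The probability weight of an outcome `ω`. -/
def W (p : ℝ) (ω : EdgeIdx n → Bool) : ℝ := ∏ e, (if ω e then p else 1 - p)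

lemma W_nonneg {p : ℝ} (hp : p ∈ Set.Ioo (0:ℝ) 1) (ω : EdgeIdx n → Bool) : 0 ≤ W p ω := by
  apply Finset.prod_nonneg
  intro e _
  have h2 := hp.2
  have h1 := hp.1
  split_ifs
  · linarith
  · linarith

lemma sum_W {p : ℝ} : ∑ ω : EdgeIdx n → Bool, W p ω = 1 := by
  unfold W
  rw [sum_pi_bool (fun (_ : EdgeIdx n) b => if b then p else 1 - p)]
  apply Finset.prod_eq_one
  intro e _
  norm_num

lemma sum_W_Iv {p : ℝ} (v : Fin n) :
    ∑ ω : EdgeIdx n → Bool, W p ω * (if deg ω v = 0 then (1:ℝ) else 0)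
      = (1 - p) ^ (n - 1) := by
  have hpt : ∀ ω : EdgeIdx n → Bool,
      W p ω * (if deg ω v = 0 then (1:ℝ) else 0)
      = ∏ e, ((if ω e then p else 1 - p)
          * (if touch v e then (if ω e then (0:ℝ) else 1) else 1)) := by
    intro ω
    rw [Finset.prod_mul_distrib]
    unfold W
    congr 1
    by_cases h : deg ω v = 0
    · rw [if_pos h]
      symm
      apply Finset.prod_eq_one
      intro e _
      have he := (deg_eq_zero_iff_edges ω v).mp h e
      split_ifs with ht hb
      · rw [he ht] at hb; exact absurd hb (by simp)
      · rfl
      · rfl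
    · rw [if_neg h]
      rw [deg_eq_zero_iff_edges] at h
      push_neg at h
      obtain ⟨e, ht, he⟩ := h
      symm
      apply Finset.prod_eq_zero (Finset.mem_univ e)
      rw [if_pos ht]
      simp only [ne_eq, Bool.not_eq_false] at he
      rw [if_pos he]
  rw [Finset.sum_congr rfl fun ω _ => hpt ω]
  rw [sum_pi_bool (fun (e : EdgeIdx n) b => (if b then p else 1 - p)
        * (if touch v e then (if b then (0:ℝ) else 1) else 1))]
  have : ∀ e : EdgeIdx n,
      ((if true then p else 1 - p) * (if touch v e then (if true then (0:ℝ) else 1) else 1)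
        + (if false then p else 1 - p) * (if touch v e then (if false then (0:ℝ) else 1) else 1))
      = if touch v e then 1 - p else 1 := by
    intro e
    by_cases ht : touch v e <;> simp [ht]
  rw [Finset.prod_congr rfl fun e _ => this e]
  rw [Finset.prod_ite, Finset.prod_const, Finset.prod_const, one_pow, mul_one]
  rw [card_touch]
  exact Fin.pos v

lemma deg_zero_congr {v : Fin n} {ω ω' : EdgeIdx n → Bool}
    (h : ∀ e, touch v e → ω e = ω' e) : deg ω v = 0 ↔ deg ω' v = 0 := by
  rw [deg_eq_zero_iff_edges, deg_eq_zero_iff_edges]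
  constructor
  · intro H e ht; rw [← h e ht]; exact H e ht
  · intro H e ht; rw [h e ht]; exact H e ht

lemma sum_W_Iv_mul {p : ℝ} (v : Fin n) (G : (EdgeIdx n → Bool) → ℝ)
    (hG : ∀ ω ω' : EdgeIdx n → Bool,
      (∀ e, ¬ touch v e → ω e = ω' e) → G ω = G ω') :
    ∑ ω : EdgeIdx n → Bool, W p ω * ((if deg ω v = 0 then (1:ℝ) else 0) * G ω)
      = (1 - p) ^ (n - 1) * ∑ ω : EdgeIdx n → Bool, W p ω * G ω := by
  have h1 : ∀ e : EdgeIdx n,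
      (if true then p else 1 - p) + (if false then p else 1 - p) = 1 := by
    intro e; norm_num
  have hsp := sum_split (touch v) (fun (_ : EdgeIdx n) b => if b then p else 1 - p)
    (fun e => h1 e) (fun ω => if deg ω v = 0 then (1:ℝ) else 0) G
    (fun ω ω' h => by
      show (if deg ω v = 0 then (1:ℝ) else 0) = (if deg ω' v = 0 then (1:ℝ) else 0)
      rw [if_congr (deg_zero_congr h) rfl rfl])
    (fun ω ω' h => hG ω ω' h)
  unfold W
  rw [hsp]
  have := sum_W_Iv (p := p) v
  unfold W at this
  rw [this]

/-! ### Measure to sum -/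

lemma bern_singleton {p : ℝ} (hp : p ∈ Set.Ioo (0:ℝ) 1) (b : Bool) :
    bern p {b} = ENNReal.ofReal (if b then p else 1 - p) := by
  cases b <;>
    simp [bern, Measure.dirac_apply, Set.indicator, Measure.add_apply, Measure.smul_apply,
      smul_eq_mul]

lemma gnp_singleton {p : ℝ} (hp : p ∈ Set.Ioo (0:ℝ) 1) (ω : EdgeIdx n → Bool) :
    gnp n p {ω} = ENNReal.ofReal (W p ω) := by
  unfold gnp
  rw [← Set.univ_pi_singleton ω, Measure.pi_pi]
  rw [Finset.prod_congr rfl fun e _ => bern_singleton hp (ω e)]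
  rw [← ENNReal.ofReal_prod_of_nonneg]
  · rfl
  · intro e _
    have h1 := hp.1
    have h2 := hp.2
    split_ifs <;> linarith

lemma gnp_apply {p : ℝ} (hp : p ∈ Set.Ioo (0:ℝ) 1) (S : Set (EdgeIdx n → Bool)) :
    ((gnp n p) S).toReal = ∑ ω : EdgeIdx n → Bool, S.indicator (W p) ω := by
  classical
  have hS : S = ↑(Finset.univ.filter (· ∈ S)) := by
    ext ω; simp
  have hsum := MeasureTheory.sum_measure_preimage_singleton
    (μ := gnp n p) (Finset.univ.filter (· ∈ S)) (f := id)
    (fun y _ => by simp)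
  simp only [Set.preimage_id] at hsum
  rw [hS, ← hsum]
  rw [ENNReal.toReal_sum]
  · rw [Finset.sum_congr rfl fun ω _ => by
      rw [gnp_singleton hp, ENNReal.toReal_ofReal (W_nonneg hp ω)]]
    rw [Finset.sum_filter]
    apply Finset.sum_congr rfl
    intro ω _
    simp [Set.indicator_apply]
  · intro ω _
    rw [gnp_singleton hp]
    exact ENNReal.ofReal_ne_top

/-! ### The moment generating function -/

lemma cast_isolCount (ω : EdgeIdx n → Bool) :
    (isolCount ω : ℝ) = ∑ v : Fin n, (if deg ω v = 0 then (1:ℝ) else 0) := by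
  unfold isolCount
  rw [Finset.card_filter]
  push_cast
  apply Finset.sum_congr rfl
  intro v _
  split_ifs <;> simp

lemma mprime_identity {p : ℝ} (θ : ℝ) :
    ∑ ω : EdgeIdx n → Bool, W p ω * ((isolCount ω : ℝ) * Real.exp (θ * isolCount ω))
      = (1 - p) ^ (n - 1)
        * ∑ v : Fin n, ∑ ω : EdgeIdx n → Bool,
            W p ω * Real.exp (θ * isolCountDel ω v) := by
  have step1 : ∀ ω : EdgeIdx n → Bool,
      W p ω * ((isolCount ω : ℝ) * Real.exp (θ * isolCount ω))
      = ∑ v : Fin n, W p ω * ((if deg ω v = 0 then (1:ℝ) else 0)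
          * Real.exp (θ * isolCountDel ω v)) := by
    intro ω
    nth_rewrite 1 [cast_isolCount ω]
    rw [Finset.sum_mul, Finset.mul_sum]
    apply Finset.sum_congr rfl
    intro v _
    by_cases h : deg ω v = 0
    · rw [isolCount_eq_isolCountDel h]
    · simp [h]
  rw [Finset.sum_congr rfl fun ω _ => step1 ω]
  rw [Finset.sum_comm]
  rw [Finset.mul_sum]
  apply Finset.sum_congr rfl
  intro v _
  exact sum_W_Iv_mul v (fun ω => Real.exp (θ * isolCountDel ω v))
    (fun ω ω' h => by
      show Real.exp (θ * (isolCountDel ω v : ℝ)) = Real.exp (θ * (isolCountDel ω' v : ℝ))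
      rw [isolCountDel_congr h])

lemma key_pointwise {θ : ℝ} (hθ : θ ≤ 0) (ω : EdgeIdx n → Bool) :
    (n : ℝ) * Real.exp (2 * θ) * Real.exp (θ * isolCount ω)
      ≤ ∑ v : Fin n, Real.exp (θ * isolCountDel ω v) := by
  have hsum : (∑ v : Fin n, (isolCountDel ω v : ℝ))
      ≤ (n : ℝ) * isolCount ω + 2 * n := by
    have := sum_isolCountDel_le ω
    calc (∑ v : Fin n, (isolCountDel ω v : ℝ))
        = ((∑ v : Fin n, isolCountDel ω v : ℕ) : ℝ) := by push_cast; rfl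
      _ ≤ ((n * isolCount ω + 2 * n : ℕ) : ℝ) := by exact_mod_cast this
      _ = (n : ℝ) * isolCount ω + 2 * n := by push_cast; ring
  set c : ℝ := θ * isolCount ω + 2 * θ with hc
  have hv : ∀ v : Fin n,
      Real.exp c * (1 + (θ * isolCountDel ω v - c))
        ≤ Real.exp (θ * isolCountDel ω v) := by
    intro v
    have h1 : (θ * isolCountDel ω v - c) + 1 ≤ Real.exp (θ * isolCountDel ω v - c) :=
      Real.add_one_le_exp _
    calc Real.exp c * (1 + (θ * isolCountDel ω v - c))
        ≤ Real.exp c * Real.exp (θ * isolCountDel ω v - c) := by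
          apply mul_le_mul_of_nonneg_left _ (Real.exp_pos c).le
          linarith
      _ = Real.exp (θ * isolCountDel ω v) := by rw [← Real.exp_add]; ring_nf
  have hsum2 : ∑ v : Fin n, Real.exp c * (1 + (θ * isolCountDel ω v - c))
      ≤ ∑ v : Fin n, Real.exp (θ * isolCountDel ω v) :=
    Finset.sum_le_sum fun v _ => hv v
  have hexpand : ∑ v : Fin n, Real.exp c * (1 + (θ * isolCountDel ω v - c))
      = Real.exp c * ((n : ℝ)
          + (θ * (∑ v : Fin n, (isolCountDel ω v : ℝ)) - n * c)) := by
    rw [← Finset.mul_sum]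
    congr 1
    have hterm : ∀ v : Fin n, (1:ℝ) + (θ * isolCountDel ω v - c)
        = (1 - c) + θ * isolCountDel ω v := fun v => by ring
    rw [Finset.sum_congr rfl fun v _ => hterm v, Finset.sum_add_distrib, Finset.sum_const,
      ← Finset.mul_sum, Finset.card_univ, Fintype.card_fin, nsmul_eq_mul]
    ring
  have hd : 0 ≤ θ * (∑ v : Fin n, (isolCountDel ω v : ℝ)) - n * c := by
    have h2 : (∑ v : Fin n, (isolCountDel ω v : ℝ)) - (n : ℝ) * isolCount ω - 2 * n ≤ 0 := by
      linarith
    rw [hc]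
    nlinarith [mul_nonneg (neg_nonneg.mpr hθ) (neg_nonneg.mpr h2)]
  have hstart : (n : ℝ) * Real.exp (2 * θ) * Real.exp (θ * isolCount ω)
      = (n : ℝ) * Real.exp c := by
    rw [hc, mul_assoc, ← Real.exp_add]
    ring_nf
  rw [hstart]
  calc (n : ℝ) * Real.exp c
      ≤ Real.exp c * ((n : ℝ)
          + (θ * (∑ v : Fin n, (isolCountDel ω v : ℝ)) - n * c)) := by
        nlinarith [Real.exp_pos c]
    _ = ∑ v : Fin n, Real.exp c * (1 + (θ * isolCountDel ω v - c)) := hexpand.symm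
    _ ≤ ∑ v : Fin n, Real.exp (θ * isolCountDel ω v) := hsum2

lemma key_ineq {p : ℝ} (hp : p ∈ Set.Ioo (0:ℝ) 1) {θ : ℝ} (hθ : θ ≤ 0) :
    (n : ℝ) * (1 - p) ^ (n - 1) * Real.exp (2 * θ)
        * (∑ ω : EdgeIdx n → Bool, W p ω * Real.exp (θ * isolCount ω))
      ≤ ∑ ω : EdgeIdx n → Bool,
          W p ω * ((isolCount ω : ℝ) * Real.exp (θ * isolCount ω)) := by
  rw [mprime_identity θ]
  have hq : (0:ℝ) ≤ (1 - p) ^ (n - 1) := by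
    have h2 := hp.2
    have h01 : (0:ℝ) ≤ 1 - p := by linarith
    exact pow_nonneg h01 _
  have main : (n : ℝ) * Real.exp (2 * θ)
        * (∑ ω : EdgeIdx n → Bool, W p ω * Real.exp (θ * isolCount ω))
      ≤ ∑ v : Fin n, ∑ ω : EdgeIdx n → Bool,
          W p ω * Real.exp (θ * isolCountDel ω v) := by
    rw [Finset.sum_comm]
    rw [Finset.mul_sum]
    apply Finset.sum_le_sum
    intro ω _
    rw [← Finset.mul_sum]
    have hW := W_nonneg hp ω
    have hpt := key_pointwise hθ ω
    calc (n : ℝ) * Real.exp (2 * θ) * (W p ω * Real.exp (θ * isolCount ω))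
        = W p ω * ((n : ℝ) * Real.exp (2 * θ) * Real.exp (θ * isolCount ω)) := by ring
      _ ≤ W p ω * ∑ v : Fin n, Real.exp (θ * isolCountDel ω v) :=
          mul_le_mul_of_nonneg_left hpt hW
  calc (n : ℝ) * (1 - p) ^ (n - 1) * Real.exp (2 * θ)
        * (∑ ω : EdgeIdx n → Bool, W p ω * Real.exp (θ * isolCount ω))
      = (1 - p) ^ (n - 1) * ((n : ℝ) * Real.exp (2 * θ)
          * (∑ ω : EdgeIdx n → Bool, W p ω * Real.exp (θ * isolCount ω))) := by ring
    _ ≤ (1 - p) ^ (n - 1) * ∑ v : Fin n, ∑ ω : EdgeIdx n → Bool,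
          W p ω * Real.exp (θ * isolCountDel ω v) :=
        mul_le_mul_of_nonneg_left main hq

lemma exp_neg_quad {y : ℝ} (hy : 0 ≤ y) : Real.exp (-y) ≤ 1 - y + y ^ 2 / 2 := by
  have hder : ∀ x : ℝ, HasDerivAt (fun z : ℝ => 1 - z + z ^ 2 / 2 - Real.exp (-z))
      (-1 + x + Real.exp (-x)) x := by
    intro x
    have h1 : HasDerivAt (fun z : ℝ => -z) (-1 : ℝ) x := (hasDerivAt_id x).neg
    have h2 := h1.exp
    have h3 : HasDerivAt (fun z : ℝ => z ^ 2 / 2) x x := by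
      have := (hasDerivAt_pow 2 x).div_const 2
      simpa using this
    have h4 : HasDerivAt (fun z : ℝ => 1 - z) (-1 : ℝ) x := by
      exact ((hasDerivAt_const x (1:ℝ)).fun_sub (hasDerivAt_id' x)).congr_deriv (by norm_num)
    have := (h4.fun_add h3).fun_sub h2
    refine this.congr_deriv ?_
    ring
  have hdiff : Differentiable ℝ (fun z : ℝ => 1 - z + z ^ 2 / 2 - Real.exp (-z)) :=
    fun x => (hder x).differentiableAt
  have hmono : MonotoneOn (fun z : ℝ => 1 - z + z ^ 2 / 2 - Real.exp (-z)) (Set.Ici 0) := by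
    apply monotoneOn_of_deriv_nonneg (convex_Ici 0)
    · exact hdiff.continuous.continuousOn
    · exact hdiff.differentiableOn
    · intro x hx
      rw [interior_Ici] at hx
      rw [(hder x).deriv]
      have := Real.add_one_le_exp (-x)
      linarith
  have h0 : (1:ℝ) - 0 + 0 ^ 2 / 2 - Real.exp (-0) ≤ 1 - y + y ^ 2 / 2 - Real.exp (-y) :=
    hmono Set.self_mem_Ici (Set.mem_Ici.mpr hy) hy
  rw [neg_zero, Real.exp_zero] at h0
  linarith

lemma mgf_bound {p : ℝ} (hp : p ∈ Set.Ioo (0:ℝ) 1) {x : ℝ} (hx : 0 ≤ x) :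
    (∑ ω : EdgeIdx n → Bool, W p ω * Real.exp (-x * isolCount ω))
      ≤ Real.exp (((n : ℝ) * (1 - p) ^ (n - 1) / 2) * (Real.exp (-(2 * x)) - 1)) := by
  set μ : ℝ := (n : ℝ) * (1 - p) ^ (n - 1) with hμdef
  set m : ℝ → ℝ := fun θ => ∑ ω : EdgeIdx n → Bool, W p ω * Real.exp (θ * isolCount ω)
    with hmdef
  have hm : ∀ θ : ℝ, HasDerivAt m
      (∑ ω : EdgeIdx n → Bool, W p ω * ((isolCount ω : ℝ) * Real.exp (θ * isolCount ω))) θ := by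
    intro θ
    apply HasDerivAt.fun_sum
    intro ω _
    have h1 : HasDerivAt (fun θ : ℝ => θ * (isolCount ω : ℝ)) (isolCount ω : ℝ) θ :=
      hasDerivAt_mul_const _
    have h2 := h1.exp
    have := h2.const_mul (W p ω)
    refine this.congr_deriv ?_
    ring
  set M : ℝ → ℝ := fun θ => m θ * Real.exp (-(μ/2) * Real.exp (2*θ)) with hMdef
  have hE : ∀ θ : ℝ, HasDerivAt (fun θ : ℝ => Real.exp (-(μ/2) * Real.exp (2*θ)))
      (Real.exp (-(μ/2) * Real.exp (2*θ)) * (-(μ/2) * (Real.exp (2*θ) * 2))) θ := by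
    intro θ
    have h2θ : HasDerivAt (fun θ : ℝ => 2*θ) 2 θ := by
      simpa using (hasDerivAt_id θ).const_mul 2
    exact ((h2θ.exp).const_mul (-(μ/2))).exp
  have hM : ∀ θ : ℝ, HasDerivAt M
      (((∑ ω : EdgeIdx n → Bool, W p ω * ((isolCount ω : ℝ) * Real.exp (θ * isolCount ω)))
          - μ * Real.exp (2*θ) * m θ) * Real.exp (-(μ/2) * Real.exp (2*θ))) θ := by
    intro θ
    have := (hm θ).fun_mul (hE θ)
    refine this.congr_deriv ?_
    ring
  have hMderiv : ∀ θ : ℝ, θ < 0 → 0 ≤ deriv M θ := by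
    intro θ hθ
    rw [(hM θ).deriv]
    apply mul_nonneg
    · have := key_ineq (n := n) hp (le_of_lt hθ)
      rw [← hμdef] at this
      have h2 : μ * Real.exp (2*θ) * m θ
          ≤ ∑ ω : EdgeIdx n → Bool, W p ω * ((isolCount ω : ℝ) * Real.exp (θ * isolCount ω)) := by
        calc μ * Real.exp (2*θ) * m θ = μ * Real.exp (2*θ)
              * (∑ ω : EdgeIdx n → Bool, W p ω * Real.exp (θ * isolCount ω)) := rfl
          _ ≤ _ := by
              have h3 : (n : ℝ) * (1 - p) ^ (n - 1) * Real.exp (2 * θ)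
                  * (∑ ω : EdgeIdx n → Bool, W p ω * Real.exp (θ * isolCount ω))
                = μ * Real.exp (2*θ)
                  * (∑ ω : EdgeIdx n → Bool, W p ω * Real.exp (θ * isolCount ω)) := by
                rw [hμdef]
              rw [← h3]
              exact key_ineq hp (le_of_lt hθ)
      linarith
    · exact (Real.exp_pos _).le
  have hmono : MonotoneOn M (Set.Iic 0) := by
    apply monotoneOn_of_deriv_nonneg (convex_Iic 0)
    · exact fun θ _ => ((hM θ).differentiableAt).continuousAt.continuousWithinAt
    · intro θ _
      exact ((hM θ).differentiableAt).differentiableWithinAt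
    · intro θ hθ
      rw [interior_Iic] at hθ
      exact hMderiv θ hθ
  have hm0 : m 0 = 1 := by
    rw [hmdef]
    simp only [zero_mul, Real.exp_zero, mul_one]
    exact sum_W
  have hM0 : M 0 = Real.exp (-(μ/2)) := by
    rw [hMdef]
    simp only [hm0]
    norm_num
  have hMx := hmono (Set.mem_Iic.mpr (neg_nonpos.mpr hx)) (Set.mem_Iic.mpr le_rfl)
    (neg_nonpos.mpr hx)
  rw [hM0] at hMx
  have hMxval : M (-x) = m (-x) * Real.exp (-(μ/2) * Real.exp (-(2*x))) := by
    rw [hMdef]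
    norm_num
  rw [hMxval] at hMx
  have hEpos : (0:ℝ) < Real.exp (-(μ/2) * Real.exp (-(2*x))) := Real.exp_pos _
  have hfinal : m (-x) ≤ Real.exp (-(μ/2)) / Real.exp (-(μ/2) * Real.exp (-(2*x))) := by
    rw [le_div_iff₀ hEpos]
    exact hMx
  have : Real.exp (-(μ/2)) / Real.exp (-(μ/2) * Real.exp (-(2*x)))
      = Real.exp ((μ/2) * (Real.exp (-(2*x)) - 1)) := by
    rw [← Real.exp_sub]
    congr 1
    ring
  rw [this] at hfinal
  calc (∑ ω : EdgeIdx n → Bool, W p ω * Real.exp (-x * isolCount ω))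
      = m (-x) := rfl
    _ ≤ Real.exp ((μ/2) * (Real.exp (-(2*x)) - 1)) := hfinal
    _ = Real.exp (((n : ℝ) * (1 - p) ^ (n - 1) / 2) * (Real.exp (-(2 * x)) - 1)) := by
        rw [hμdef]

/-- left tail bound for the number of isolated vertices. -/
theorem left_tail_bound (n : ℕ) (hn : 2 ≤ n) (p : ℝ) (hp : p ∈ Set.Ioo (0 : ℝ) 1)
    (μ σ : ℝ) (hμ : μ = (n : ℝ) * (1 - p) ^ (n - 1))
    (hσ : σ = Real.sqrt ((n : ℝ) * (1 - p) ^ (n - 1)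
      * (1 + (n : ℝ) * p * (1 - p) ^ (n - 2) - (1 - p) ^ (n - 2)))) :
    ∀ t : ℝ, 0 ≤ t →
      ((gnp n p) {ω | ((isolCount ω : ℝ) - μ) / σ ≤ -t}).toReal
        ≤ Real.exp (-(t ^ 2 * σ ^ 2) / (4 * μ)) := by
  intro t ht
  have hp1 := hp.1
  have hp2 := hp.2
  have hq0 : (0:ℝ) < 1 - p := by linarith
  have hnpos : (0:ℝ) < n := by
    have : (0:ℕ) < n := by omega
    exact_mod_cast this
  have hμpos : 0 < μ := by
    rw [hμ]; exact mul_pos hnpos (pow_pos hq0 _)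
  have hσpos : 0 < σ := by
    rw [hσ]
    apply Real.sqrt_pos.mpr
    have hA : (0:ℝ) < (1 - p) ^ (n - 2) := pow_pos hq0 _
    have hA1 : (1 - p) ^ (n - 2) ≤ 1 := pow_le_one₀ (by linarith) (by linarith)
    have hnp : (0:ℝ) < (n:ℝ) * p := mul_pos hnpos hp1
    have hfac : (0:ℝ) < 1 + (n:ℝ) * p * (1 - p) ^ (n - 2) - (1 - p) ^ (n - 2) := by
      nlinarith
    exact mul_pos (mul_pos hnpos (pow_pos hq0 _)) hfac
  set s : ℝ := t * σ with hs
  have hs0 : 0 ≤ s := mul_nonneg ht hσpos.le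
  set x : ℝ := s / (2 * μ) with hxdef
  have hx0 : 0 ≤ x := div_nonneg hs0 (by linarith)
  rw [gnp_apply hp]
  have hbound : ∀ ω : EdgeIdx n → Bool,
      ({ω : EdgeIdx n → Bool | ((isolCount ω : ℝ) - μ) / σ ≤ -t}).indicator (W p) ω
        ≤ W p ω * (Real.exp (-x * isolCount ω) * Real.exp (x * (μ - s))) := by
    intro ω
    rw [Set.indicator_apply]
    split_ifs with hω
    · have hY : (isolCount ω : ℝ) ≤ μ - s := by
        simp only [Set.mem_setOf_eq] at hω
        rw [div_le_iff₀ hσpos] at hω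
        have : s = t * σ := hs
        linarith
      have h1 : (1:ℝ) ≤ Real.exp (-x * isolCount ω) * Real.exp (x * (μ - s)) := by
        rw [← Real.exp_add]
        have harg : (0:ℝ) ≤ -x * isolCount ω + x * (μ - s) := by nlinarith
        calc (1:ℝ) = Real.exp 0 := (Real.exp_zero).symm
          _ ≤ _ := Real.exp_le_exp.mpr harg
      calc W p ω = W p ω * 1 := (mul_one _).symm
        _ ≤ _ := mul_le_mul_of_nonneg_left h1 (W_nonneg hp ω)
    · exact mul_nonneg (W_nonneg hp ω)
        (mul_nonneg (Real.exp_pos _).le (Real.exp_pos _).le)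
  have hmgf := mgf_bound (n := n) hp hx0
  rw [← hμ] at hmgf
  calc (∑ ω : EdgeIdx n → Bool,
        ({ω : EdgeIdx n → Bool | ((isolCount ω : ℝ) - μ) / σ ≤ -t}).indicator (W p) ω)
      ≤ ∑ ω : EdgeIdx n → Bool,
          W p ω * (Real.exp (-x * isolCount ω) * Real.exp (x * (μ - s))) :=
        Finset.sum_le_sum fun ω _ => hbound ω
    _ = (∑ ω : EdgeIdx n → Bool, W p ω * Real.exp (-x * isolCount ω))
          * Real.exp (x * (μ - s)) := by
        rw [Finset.sum_mul]
        apply Finset.sum_congr rfl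
        intro ω _
        ring
    _ ≤ Real.exp (μ / 2 * (Real.exp (-(2 * x)) - 1)) * Real.exp (x * (μ - s)) :=
        mul_le_mul_of_nonneg_right hmgf (Real.exp_pos _).le
    _ = Real.exp (μ / 2 * (Real.exp (-(2 * x)) - 1) + x * (μ - s)) :=
        (Real.exp_add _ _).symm
    _ ≤ Real.exp (-(t ^ 2 * σ ^ 2) / (4 * μ)) := by
        apply Real.exp_le_exp.mpr
        have hquad := exp_neg_quad (y := 2 * x) (by linarith)
        have h1 : Real.exp (-(2 * x)) - 1 ≤ -2 * x + 2 * x ^ 2 := by nlinarith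
        have h2 : μ / 2 * (Real.exp (-(2 * x)) - 1) ≤ μ / 2 * (-2 * x + 2 * x ^ 2) :=
          mul_le_mul_of_nonneg_left h1 (by linarith)
        have hxval : μ * x ^ 2 - x * s = -(s ^ 2) / (4 * μ) := by
          rw [hxdef]
          field_simp
          ring
        have hfin : -(s ^ 2) / (4 * μ) = -(t ^ 2 * σ ^ 2) / (4 * μ) := by
          rw [hs]
          ring_nf
        nlinarith [h2, hxval, hfin]


end ErdosRenyiIsolated
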